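/- Let ν : ℝ → [0,∞) be a measurable even function bounded above by a constant C₀, and suppose there are constants K > 0 and γ ∈ (-1,0) such that ν(s)/(K·s^γ) → 1 as s → +∞. Let m ≥ 1 be an integer and let α, β ∈ (-1,0) satisfy (m-1)γ > -1 and α + β + (m-1)γ > -2. Then there exist constants 0 < c ≤ C and h₀ > 0 such that for all h ≥ h₀: c · h^{α+β+(m-1)γ+3} ≤ ∫_{[0,h]³} (s-u)₊^α · (s-v)₊^β · ν(u-v)^{m-1} ds du dv ≤ C · h^{α+β+(m-1)γ+3}. -/

import Mathlib

open MeasureTheory Filter Set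
open scoped ENNReal

/-- `(a)₊^p`: `a ^ p` (real power) when `a > 0`, and `0` when `a ≤ 0`. -/
noncomputable def posPow (a p : ℝ) : ℝ := if 0 < a then a ^ p else 0

lemma posPow_nonneg (a p : ℝ) : 0 ≤ posPow a p := by
  unfold posPow; split_ifs with h
  · exact Real.rpow_nonneg h.le p
  · exact le_rfl

lemma measurable_posPow (p : ℝ) : Measurable (fun a => posPow a p) := by
  unfold posPow
  exact Measurable.ite measurableSet_Ioi
    (by fun_prop : Measurable fun a : ℝ => a ^ p) measurable_const

lemma lintegral_Ioc_rpow {q h : ℝ} (hq : -1 < q) (hh : 0 ≤ h) :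
    ∫⁻ t in Ioc (0:ℝ) h, ENNReal.ofReal (t ^ q) = ENNReal.ofReal (h ^ (q+1) / (q+1)) := by
  have hInt : IntegrableOn (fun t : ℝ => t ^ q) (Ioc 0 h) := by
    have := intervalIntegral.intervalIntegrable_rpow' (a:=0) (b:=h) hq
    rwa [intervalIntegrable_iff_integrableOn_Ioc_of_le hh] at this
  rw [← ofReal_integral_eq_lintegral_ofReal hInt ?_]
  · congr 1
    rw [← intervalIntegral.integral_of_le hh, integral_rpow (Or.inl hq),
      Real.zero_rpow (by linarith : q+1 ≠ 0), sub_zero]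
  · filter_upwards [ae_restrict_mem measurableSet_Ioc] with t ht
    exact Real.rpow_nonneg ht.1.le q

lemma key1D {q h c : ℝ} (hq1 : -1 < q) (hh : 0 ≤ h) (hc : c ≤ h) :
    ∫⁻ x in Icc (0:ℝ) h, ENNReal.ofReal (posPow (c - x) q)
      ≤ ENNReal.ofReal (h ^ (q+1) / (q+1)) := by
  set G : ℝ → ℝ≥0∞ := (Ioc (0:ℝ) h).indicator (fun t => ENNReal.ofReal (t ^ q)) with hGdef
  have hGmeas : Measurable G :=
    Measurable.indicator (by fun_prop) measurableSet_Ioc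
  have step1 : ∫⁻ x in Icc (0:ℝ) h, ENNReal.ofReal (posPow (c - x) q) ≤ ∫⁻ x, G (c - x) := by
    rw [← lintegral_indicator measurableSet_Icc _]
    apply lintegral_mono
    intro x
    by_cases hx : x ∈ Icc (0:ℝ) h
    · rw [indicator_of_mem hx]
      show ENNReal.ofReal (posPow (c - x) q) ≤ G (c - x)
      by_cases hpos : 0 < c - x
      · have hmem : c - x ∈ Ioc (0:ℝ) h := ⟨hpos, by have := hx.1; linarith⟩
        rw [hGdef, indicator_of_mem hmem, posPow, if_pos hpos]
      · rw [posPow, if_neg hpos]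
        simp
    · rw [indicator_of_notMem hx]; exact zero_le
  have step2 : ∫⁻ x, G (c - x) = ∫⁻ x, G x := by
    have hH : Measurable (fun y : ℝ => G (c + y)) :=
      hGmeas.comp (measurable_const.add measurable_id)
    calc ∫⁻ x, G (c - x) = ∫⁻ x, (fun y => G (c + y)) (-x) := by
          simp only [← sub_eq_add_neg]
      _ = ∫⁻ y, G (c + y) := by
          rw [← lintegral_map hH measurable_neg, Measure.map_neg_eq_self]
      _ = ∫⁻ y, G y := lintegral_add_left_eq_self G c
  have step3 : ∫⁻ x, G x = ENNReal.ofReal (h ^ (q+1) / (q+1)) := by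
    rw [hGdef, lintegral_indicator measurableSet_Ioc _]
    exact lintegral_Ioc_rpow hq1 hh
  exact step1.trans (le_of_eq (step2.trans step3))

lemma wbound_pt {w : ℝ → ℝ} (hwnn : ∀ t, 0 ≤ w t) {M δ : ℝ} (hM : 0 ≤ M)
    (hwb : ∀ t > 0, w t ≤ M * t ^ δ) (q t : ℝ) :
    posPow t q * w t ≤ M * posPow t (q + δ) := by
  by_cases ht : 0 < t
  · rw [posPow, if_pos ht, posPow, if_pos ht, Real.rpow_add ht]
    have h1 : t ^ q * w t ≤ t ^ q * (M * t ^ δ) :=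
      mul_le_mul_of_nonneg_left (hwb t ht) (Real.rpow_nonneg ht.le q)
    calc t ^ q * w t ≤ t ^ q * (M * t ^ δ) := h1
      _ = M * (t ^ q * t ^ δ) := by ring
  · rw [posPow, if_neg ht, posPow, if_neg ht, zero_mul, mul_zero]

lemma key1Dw {w : ℝ → ℝ} (hwnn : ∀ t, 0 ≤ w t) {M δ q h c : ℝ} (hM : 0 ≤ M)
    (hwb : ∀ t > 0, w t ≤ M * t ^ δ)
    (hq1 : -1 < q + δ) (hh : 0 ≤ h) (hc : c ≤ h) :
    ∫⁻ x in Icc (0:ℝ) h, ENNReal.ofReal (posPow (c - x) q * w (c - x))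
      ≤ ENNReal.ofReal M * ENNReal.ofReal (h ^ (q + δ + 1) / (q + δ + 1)) := by
  calc ∫⁻ x in Icc (0:ℝ) h, ENNReal.ofReal (posPow (c - x) q * w (c - x))
      ≤ ∫⁻ x in Icc (0:ℝ) h, ENNReal.ofReal M * ENNReal.ofReal (posPow (c - x) (q + δ)) := by
        apply lintegral_mono
        intro x
        dsimp only
        rw [← ENNReal.ofReal_mul hM]
        exact ENNReal.ofReal_le_ofReal (wbound_pt hwnn hM hwb q (c - x))
    _ = ENNReal.ofReal M * ∫⁻ x in Icc (0:ℝ) h, ENNReal.ofReal (posPow (c - x) (q + δ)) :=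
        lintegral_const_mul' _ _ ENNReal.ofReal_ne_top
    _ ≤ ENNReal.ofReal M * ENNReal.ofReal (h ^ (q + δ + 1) / (q + δ + 1)) :=
        mul_le_mul_right (key1D hq1 hh hc) _

lemma helper_split {x y s q₁ q₂ r W : ℝ} (hxy : x < y) (hq₁ : q₁ ≤ 0) (hq₂ : q₂ ≤ 0)
    (hW : 0 ≤ W) :
    posPow (s - x) (q₁ + q₂) * posPow (s - y) r * W
      ≤ posPow (y - x) q₂ * W * posPow (s - y) (q₁ + r) := by
  by_cases hs : 0 < s - y
  · have hsx : 0 < s - x := by linarith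
    have hyx : 0 < y - x := by linarith
    simp only [posPow]
    rw [if_pos hs, if_pos hsx, if_pos hyx, if_pos hs, Real.rpow_add hsx, Real.rpow_add hs]
    have b1 : (s-x) ^ q₁ ≤ (s-y) ^ q₁ := Real.rpow_le_rpow_of_nonpos hs (by linarith) hq₁
    have b2 : (s-x) ^ q₂ ≤ (y-x) ^ q₂ := Real.rpow_le_rpow_of_nonpos hyx (by linarith) hq₂
    have key : (s-x) ^ q₁ * (s-x) ^ q₂ ≤ (s-y) ^ q₁ * (y-x) ^ q₂ :=
      mul_le_mul b1 b2 (Real.rpow_nonneg hsx.le _) (Real.rpow_nonneg hs.le _)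
    have hrest : 0 ≤ (s-y) ^ r * W := mul_nonneg (Real.rpow_nonneg hs.le _) hW
    calc (s-x) ^ q₁ * (s-x) ^ q₂ * (s-y) ^ r * W
        = ((s-x) ^ q₁ * (s-x) ^ q₂) * ((s-y) ^ r * W) := by ring
      _ ≤ ((s-y) ^ q₁ * (y-x) ^ q₂) * ((s-y) ^ r * W) :=
          mul_le_mul_of_nonneg_right key hrest
      _ = (y-x) ^ q₂ * W * ((s-y) ^ q₁ * (s-y) ^ r) := by ring
  · simp only [posPow]
    rw [if_neg hs, if_neg hs]
    simp

lemma diag_null :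
    (volume : Measure (ℝ×ℝ×ℝ)) {p : ℝ×ℝ×ℝ | p.2.1 = p.2.2} = 0 := by
  have hD : MeasurableSet {q : ℝ×ℝ | q.1 = q.2} :=
    (isClosed_eq continuous_fst continuous_snd).measurableSet
  have hDnull : (volume : Measure (ℝ×ℝ)) {q : ℝ×ℝ | q.1 = q.2} = 0 := by
    rw [Measure.volume_eq_prod, Measure.prod_apply hD]
    have hfib : ∀ x : ℝ, (Prod.mk x ⁻¹' {q : ℝ×ℝ | q.1 = q.2}) = {x} := by
      intro x; ext y; simp [eq_comm]
    simp [hfib]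
  have hset : {p : ℝ×ℝ×ℝ | p.2.1 = p.2.2} = (univ : Set ℝ) ×ˢ {q : ℝ×ℝ | q.1 = q.2} := by
    ext p; simp
  rw [hset, Measure.volume_eq_prod, Measure.prod_prod, hDnull, mul_zero]

lemma upper_main (w : ℝ → ℝ) (hw : Measurable w) (hwnn : ∀ t, 0 ≤ w t)
    (hwe : ∀ t, w (-t) = w t)
    (M δ : ℝ) (hM : 0 ≤ M) (hwb : ∀ t > 0, w t ≤ M * t ^ δ)
    (α β α₁ α₂ β₁ β₂ : ℝ)
    (hA : α = α₁ + α₂) (hB : β = β₁ + β₂)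
    (hα₁ : α₁ ≤ 0) (hα₂ : α₂ ≤ 0) (hβ₁ : β₁ ≤ 0) (hβ₂ : β₂ ≤ 0)
    (he₁ : -1 < α₁ + β) (hq₁ : -1 < α₂ + δ)
    (he₂ : -1 < β₁ + α) (hq₂ : -1 < β₂ + δ)
    (h : ℝ) (hh : 0 ≤ h) :
    ∫⁻ p in (Icc (0:ℝ) h) ×ˢ (Icc (0:ℝ) h) ×ˢ (Icc (0:ℝ) h),
        ENNReal.ofReal (posPow (p.1 - p.2.1) α * posPow (p.1 - p.2.2) β * w (p.2.1 - p.2.2))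
      ≤ ENNReal.ofReal h *
        (ENNReal.ofReal M * ENNReal.ofReal (h ^ (α₂+δ+1) / (α₂+δ+1)) *
            ENNReal.ofReal (h ^ (α₁+β+1) / (α₁+β+1))
          + ENNReal.ofReal M * ENNReal.ofReal (h ^ (β₂+δ+1) / (β₂+δ+1)) *
            ENNReal.ofReal (h ^ (β₁+α+1) / (β₁+α+1))) := by
  set I := Icc (0:ℝ) h with hI
  set μI := (volume : Measure ℝ).restrict I with hμI
  set G₁ := ENNReal.ofReal M * ENNReal.ofReal (h ^ (α₂+δ+1) / (α₂+δ+1)) with hG₁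
  set Ψ₁ := ENNReal.ofReal (h ^ (α₁+β+1) / (α₁+β+1)) with hΨ₁
  set G₂ := ENNReal.ofReal M * ENNReal.ofReal (h ^ (β₂+δ+1) / (β₂+δ+1)) with hG₂
  set Ψ₂ := ENNReal.ofReal (h ^ (β₁+α+1) / (β₁+α+1)) with hΨ₂
  set F : ℝ×ℝ×ℝ → ℝ≥0∞ := fun p =>
    ENNReal.ofReal (posPow (p.1 - p.2.1) α * posPow (p.1 - p.2.2) β * w (p.2.1 - p.2.2)) with hF
  set F₁ : ℝ×ℝ×ℝ → ℝ≥0∞ := fun p =>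
    ENNReal.ofReal (posPow (p.2.2 - p.2.1) α₂ * w (p.2.2 - p.2.1)) *
      ENNReal.ofReal (posPow (p.1 - p.2.2) (α₁+β)) with hF1
  set F₂ : ℝ×ℝ×ℝ → ℝ≥0∞ := fun p =>
    ENNReal.ofReal (posPow (p.2.1 - p.2.2) β₂ * w (p.2.1 - p.2.2)) *
      ENNReal.ofReal (posPow (p.1 - p.2.1) (β₁+α)) with hF2
  have hsub : Measurable fun p : ℝ×ℝ×ℝ => p.1 - p.2.1 :=
    measurable_fst.sub (measurable_fst.comp measurable_snd)
  have hsub2 : Measurable fun p : ℝ×ℝ×ℝ => p.1 - p.2.2 :=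
    measurable_fst.sub (measurable_snd.comp measurable_snd)
  have hsub3 : Measurable fun p : ℝ×ℝ×ℝ => p.2.1 - p.2.2 :=
    (measurable_fst.comp measurable_snd).sub (measurable_snd.comp measurable_snd)
  have hsub4 : Measurable fun p : ℝ×ℝ×ℝ => p.2.2 - p.2.1 :=
    (measurable_snd.comp measurable_snd).sub (measurable_fst.comp measurable_snd)
  have hFm : Measurable F := by
    apply ENNReal.measurable_ofReal.comp
    exact (((measurable_posPow α).comp hsub).mul ((measurable_posPow β).comp hsub2)).mul
      (hw.comp hsub3)
  have hF1m : Measurable F₁ := by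
    apply Measurable.mul (f := fun p : ℝ×ℝ×ℝ => ENNReal.ofReal (posPow (p.2.2 - p.2.1) α₂ * w (p.2.2 - p.2.1)))
      (g := fun p : ℝ×ℝ×ℝ => ENNReal.ofReal (posPow (p.1 - p.2.2) (α₁+β)))
    · exact ENNReal.measurable_ofReal.comp
        (((measurable_posPow α₂).comp hsub4).mul (hw.comp hsub4))
    · exact ENNReal.measurable_ofReal.comp ((measurable_posPow (α₁+β)).comp hsub2)
  have hF2m : Measurable F₂ := by
    apply Measurable.mul (f := fun p : ℝ×ℝ×ℝ => ENNReal.ofReal (posPow (p.2.1 - p.2.2) β₂ * w (p.2.1 - p.2.2)))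
      (g := fun p : ℝ×ℝ×ℝ => ENNReal.ofReal (posPow (p.1 - p.2.1) (β₁+α)))
    · exact ENNReal.measurable_ofReal.comp
        (((measurable_posPow β₂).comp hsub3).mul (hw.comp hsub3))
    · exact ENNReal.measurable_ofReal.comp ((measurable_posPow (β₁+α)).comp hsub)
  have hen : μI.prod (μI.prod μI) = (volume : Measure (ℝ×ℝ×ℝ)).restrict (I ×ˢ I ×ˢ I) := by
    have h2 : μI.prod μI = (volume : Measure (ℝ×ℝ)).restrict (I ×ˢ I) := by
      rw [hμI, Measure.prod_restrict, ← Measure.volume_eq_prod]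
    rw [h2, hμI, Measure.prod_restrict, ← Measure.volume_eq_prod]
  -- a.e. pointwise bound
  have hFle : F ≤ᵐ[μI.prod (μI.prod μI)] fun p => F₁ p + F₂ p := by
    have hnull : (μI.prod (μI.prod μI)) {p : ℝ×ℝ×ℝ | p.2.1 = p.2.2} = 0 := by
      rw [hen]
      exact le_antisymm (le_trans (Measure.restrict_apply_le _ _) diag_null.le) zero_le
    have hae : ∀ᵐ p ∂(μI.prod (μI.prod μI)), p.2.1 ≠ p.2.2 := by
      rw [ae_iff]
      convert hnull using 2
      ext p; simp
    filter_upwards [hae] with p hp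
    obtain ⟨s, u, v⟩ := p
    simp only at hp
    rcases lt_or_gt_of_ne hp with huv | hvu
    · -- u < v
      have hww : w (u - v) = w (v - u) := by
        rw [show u - v = -(v-u) by ring, hwe]
      have hre : posPow (s-u) α * posPow (s-v) β * w (u-v)
          ≤ posPow (v-u) α₂ * w (v-u) * posPow (s-v) (α₁+β) := by
        rw [hww, hA]
        exact helper_split huv hα₁ hα₂ (hwnn _)
      calc F (s,u,v) ≤ F₁ (s,u,v) := by
            simp only [hF, hF1]
            rw [← ENNReal.ofReal_mul (mul_nonneg (posPow_nonneg _ _) (hwnn _))]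
            exact ENNReal.ofReal_le_ofReal hre
        _ ≤ F₁ (s,u,v) + F₂ (s,u,v) := le_self_add
    · -- v < u
      have hre : posPow (s-u) α * posPow (s-v) β * w (u-v)
          ≤ posPow (u-v) β₂ * w (u-v) * posPow (s-u) (β₁+α) := by
        rw [hB]
        calc posPow (s-u) α * posPow (s-v) (β₁+β₂) * w (u-v)
            = posPow (s-v) (β₁+β₂) * posPow (s-u) α * w (u-v) := by ring
          _ ≤ _ := helper_split hvu hβ₁ hβ₂ (hwnn (u-v))
      calc F (s,u,v) ≤ F₂ (s,u,v) := by
            simp only [hF, hF2]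
            rw [← ENNReal.ofReal_mul (mul_nonneg (posPow_nonneg _ _) (hwnn _))]
            exact ENNReal.ofReal_le_ofReal hre
        _ ≤ F₁ (s,u,v) + F₂ (s,u,v) := le_add_self
  -- bound for F₂ iterated integral
  have hbound₂ : ∫⁻ p, F₂ p ∂(μI.prod (μI.prod μI)) ≤ ENNReal.ofReal h * (G₂ * Ψ₂) := by
    rw [lintegral_prod _ hF2m.aemeasurable]
    have inner : ∀ s ∈ I, ∫⁻ q, F₂ (s, q) ∂(μI.prod μI) ≤ G₂ * Ψ₂ := by
      intro s hs
      rw [lintegral_prod (fun q => F₂ (s, q))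
        ((hF2m.comp measurable_prodMk_left : Measurable fun q : ℝ×ℝ => F₂ (s, q)).aemeasurable)]
      have hinner2 : ∀ u ∈ I, (∫⁻ v, F₂ (s,(u,v)) ∂μI)
          ≤ ENNReal.ofReal (posPow (s - u) (β₁+α)) * G₂ := by
        intro u hu
        calc ∫⁻ v, F₂ (s,(u,v)) ∂μI
            = ENNReal.ofReal (posPow (s-u) (β₁+α)) *
                ∫⁻ v in I, ENNReal.ofReal (posPow (u-v) β₂ * w (u-v)) := by
              rw [← lintegral_const_mul' _ _ ENNReal.ofReal_ne_top]
              simp only [hF2]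
              congr 1
              funext v
              ring
          _ ≤ _ := mul_le_mul_right (key1Dw hwnn hM hwb hq₂ hh hu.2) _
      calc ∫⁻ u, (∫⁻ v, F₂ (s,(u,v)) ∂μI) ∂μI
          ≤ ∫⁻ u in I, ENNReal.ofReal (posPow (s - u) (β₁+α)) * G₂ := by
            rw [hμI]
            apply lintegral_mono_ae
            filter_upwards [ae_restrict_mem (hI ▸ measurableSet_Icc)] with u hu
            exact hinner2 u hu
        _ = G₂ * ∫⁻ u in I, ENNReal.ofReal (posPow (s - u) (β₁+α)) := by
            rw [lintegral_mul_const' G₂ _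
              (ENNReal.mul_ne_top ENNReal.ofReal_ne_top ENNReal.ofReal_ne_top), mul_comm]
        _ ≤ G₂ * Ψ₂ := mul_le_mul_right (key1D he₂ hh hs.2) _
    calc ∫⁻ s, (∫⁻ q, F₂ (s, q) ∂(μI.prod μI)) ∂μI
        ≤ ∫⁻ _ in I, (G₂ * Ψ₂) := by
          rw [hμI]
          apply lintegral_mono_ae
          filter_upwards [ae_restrict_mem (hI ▸ measurableSet_Icc)] with s hs
          exact inner s hs
      _ = ENNReal.ofReal h * (G₂ * Ψ₂) := by
          rw [lintegral_const, Measure.restrict_apply_univ, hI, Real.volume_Icc, sub_zero,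
            mul_comm]
  have hbound₁ : ∫⁻ p, F₁ p ∂(μI.prod (μI.prod μI)) ≤ ENNReal.ofReal h * (G₁ * Ψ₁) := by
    rw [lintegral_prod _ hF1m.aemeasurable]
    have inner : ∀ s ∈ I, ∫⁻ q, F₁ (s, q) ∂(μI.prod μI) ≤ G₁ * Ψ₁ := by
      intro s hs
      rw [lintegral_prod (fun q => F₁ (s, q))
        ((hF1m.comp measurable_prodMk_left : Measurable fun q : ℝ×ℝ => F₁ (s, q)).aemeasurable)]
      have hunc : AEMeasurable (Function.uncurry fun u v : ℝ => F₁ (s,(u,v))) (μI.prod μI) :=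
        (hF1m.comp measurable_prodMk_left : Measurable fun q : ℝ×ℝ => F₁ (s, q)).aemeasurable
      rw [lintegral_lintegral_swap hunc]
      have hinner2 : ∀ v ∈ I, (∫⁻ u, F₁ (s,(u,v)) ∂μI)
          ≤ ENNReal.ofReal (posPow (s - v) (α₁+β)) * G₁ := by
        intro v hv
        calc ∫⁻ u, F₁ (s,(u,v)) ∂μI
            = ENNReal.ofReal (posPow (s-v) (α₁+β)) *
                ∫⁻ u in I, ENNReal.ofReal (posPow (v-u) α₂ * w (v-u)) := by
              rw [← lintegral_const_mul' _ _ ENNReal.ofReal_ne_top]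
              simp only [hF1]
              congr 1
              funext u
              ring
          _ ≤ _ := mul_le_mul_right (key1Dw hwnn hM hwb hq₁ hh hv.2) _
      calc ∫⁻ v, (∫⁻ u, F₁ (s,(u,v)) ∂μI) ∂μI
          ≤ ∫⁻ v in I, ENNReal.ofReal (posPow (s - v) (α₁+β)) * G₁ := by
            rw [hμI]
            apply lintegral_mono_ae
            filter_upwards [ae_restrict_mem (hI ▸ measurableSet_Icc)] with v hv
            exact hinner2 v hv
        _ = G₁ * ∫⁻ v in I, ENNReal.ofReal (posPow (s - v) (α₁+β)) := by
            rw [lintegral_mul_const' G₁ _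
              (ENNReal.mul_ne_top ENNReal.ofReal_ne_top ENNReal.ofReal_ne_top), mul_comm]
        _ ≤ G₁ * Ψ₁ := mul_le_mul_right (key1D he₁ hh hs.2) _
    calc ∫⁻ s, (∫⁻ q, F₁ (s, q) ∂(μI.prod μI)) ∂μI
        ≤ ∫⁻ _ in I, (G₁ * Ψ₁) := by
          rw [hμI]
          apply lintegral_mono_ae
          filter_upwards [ae_restrict_mem (hI ▸ measurableSet_Icc)] with s hs
          exact inner s hs
      _ = ENNReal.ofReal h * (G₁ * Ψ₁) := by
          rw [lintegral_const, Measure.restrict_apply_univ, hI, Real.volume_Icc, sub_zero,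
            mul_comm]
  calc ∫⁻ p in I ×ˢ I ×ˢ I, F p
      = ∫⁻ p, F p ∂(μI.prod (μI.prod μI)) := by rw [hen]
    _ ≤ ∫⁻ p, (F₁ p + F₂ p) ∂(μI.prod (μI.prod μI)) := lintegral_mono_ae hFle
    _ = (∫⁻ p, F₁ p ∂(μI.prod (μI.prod μI))) + ∫⁻ p, F₂ p ∂(μI.prod (μI.prod μI)) :=
        lintegral_add_left hF1m _
    _ ≤ ENNReal.ofReal h * (G₁ * Ψ₁) + ENNReal.ofReal h * (G₂ * Ψ₂) :=
        add_le_add hbound₁ hbound₂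
    _ = ENNReal.ofReal h * (G₁ * Ψ₁ + G₂ * Ψ₂) := (mul_add _ _ _).symm

lemma posPow_of_pos {a : ℝ} (h : 0 < a) (p : ℝ) : posPow a p = a ^ p := if_pos h

lemma split_exists {a b δ : ℝ} (ha1 : -1 < a) (ha0 : a < 0) (hb1 : -1 < b) (hb0 : b < 0)
    (hδ1 : -1 < δ) (hδ0 : δ ≤ 0) (hab : -2 < a + b + δ) :
    ∃ a₁ a₂ : ℝ, a = a₁ + a₂ ∧ a₁ ≤ 0 ∧ a₂ ≤ 0 ∧ -1 < a₁ + b ∧ -1 < a₂ + δ := by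
  obtain ⟨x, hx1, hx2⟩ := exists_between (show max a (-1-δ) < min 0 (a+1+b) by
    rw [max_lt_iff, lt_min_iff, lt_min_iff]
    constructor <;> constructor <;> linarith)
  have h1 := lt_of_le_of_lt (le_max_left a (-1-δ)) hx1
  have h2 := lt_of_le_of_lt (le_max_right a (-1-δ)) hx1
  have h3 := lt_of_lt_of_le hx2 (min_le_left 0 (a+1+b))
  have h4 := lt_of_lt_of_le hx2 (min_le_right 0 (a+1+b))
  exact ⟨a - x, x, by ring, by linarith, by linarith, by linarith, by linarith⟩

set_option maxHeartbeats 1000000 in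
/-- Let `ν : ℝ → [0,∞)` be measurable, even, bounded by `C₀`, with
`ν s ∼ K s^γ` as `s → ∞` for `K > 0`, `γ ∈ (-1,0)`. For integer `m ≥ 1` and
`α, β ∈ (-1,0)` with `(m-1)γ > -1` and `α + β + (m-1)γ > -2`, the triple integral
`∫_{[0,h]³} (s-u)₊^α (s-v)₊^β ν(u-v)^(m-1)` is comparable (two-sided) to
`h^(α+β+(m-1)γ+3)` for all large `h`. -/
theorem stmt6 (ν : ℝ → ℝ) (C₀ K γ : ℝ) (m : ℕ) (α β : ℝ)
    (hmeas : Measurable ν) (hnn : ∀ s, 0 ≤ ν s) (hbd : ∀ s, ν s ≤ C₀)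
    (heven : ∀ s, ν (-s) = ν s)
    (hK : 0 < K) (hγ : γ ∈ Ioo (-1 : ℝ) 0)
    (hasym : Tendsto (fun s : ℝ => ν s / (K * s ^ γ)) atTop (nhds 1))
    (hm : 1 ≤ m)
    (hα : α ∈ Ioo (-1 : ℝ) 0) (hβ : β ∈ Ioo (-1 : ℝ) 0)
    (h1 : ((m : ℝ) - 1) * γ > -1) (h2 : α + β + ((m : ℝ) - 1) * γ > -2) :
    ∃ c C h₀ : ℝ, 0 < c ∧ c ≤ C ∧ 0 < h₀ ∧ ∀ h ≥ h₀,
      c * h ^ (α + β + ((m : ℝ) - 1) * γ + 3) ≤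
        (∫ p in (Icc (0 : ℝ) h) ×ˢ (Icc (0 : ℝ) h) ×ˢ (Icc (0 : ℝ) h),
          posPow (p.1 - p.2.1) α * posPow (p.1 - p.2.2) β * ν (p.2.1 - p.2.2) ^ (m - 1)) ∧
      (∫ p in (Icc (0 : ℝ) h) ×ˢ (Icc (0 : ℝ) h) ×ˢ (Icc (0 : ℝ) h),
          posPow (p.1 - p.2.1) α * posPow (p.1 - p.2.2) β * ν (p.2.1 - p.2.2) ^ (m - 1)) ≤
        C * h ^ (α + β + ((m : ℝ) - 1) * γ + 3) := by
  obtain ⟨hγ1, hγ0⟩ := hγ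
  obtain ⟨hα1, hα0⟩ := hα
  obtain ⟨hβ1, hβ0⟩ := hβ
  set δ := ((m:ℝ)-1)*γ with hδdef
  have hm1 : (1:ℝ) ≤ (m:ℝ) := by exact_mod_cast hm
  have hδ0 : δ ≤ 0 := mul_nonpos_iff.2 (Or.inl ⟨by linarith, hγ0.le⟩)
  have hδ1 : -1 < δ := h1
  have hcast : ((m-1 : ℕ) : ℝ) = (m:ℝ) - 1 := by
    rw [Nat.cast_sub hm, Nat.cast_one]
  have hpowδ : ∀ t : ℝ, 0 ≤ t → (t ^ γ) ^ (m-1) = t ^ δ := by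
    intro t ht
    rw [← Real.rpow_natCast (t ^ γ) (m-1), ← Real.rpow_mul ht]
    congr 1
    rw [hcast, hδdef]; ring
  -- asymptotic bounds
  have hIoo : ∀ᶠ s in atTop, ν s / (K * s^γ) ∈ Ioo (1/2 : ℝ) 2 :=
    hasym (Ioo_mem_nhds (by norm_num) (by norm_num))
  obtain ⟨T₀, hT₀⟩ := eventually_atTop.1 (hIoo.and (eventually_ge_atTop 1))
  set T := max T₀ 1 with hTdef
  have hT1 : (1:ℝ) ≤ T := le_max_right _ _
  have hTpos : (0:ℝ) < T := by linarith
  have hub : ∀ t ≥ T, ν t ≤ 2 * (K * t ^ γ) := by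
    intro t ht
    have h0 : (0:ℝ) < t := by linarith
    have hKt : 0 < K * t ^ γ := mul_pos hK (Real.rpow_pos_of_pos h0 γ)
    have := (hT₀ t (le_trans (le_max_left _ _) ht)).1.2
    exact ((div_lt_iff₀ hKt).1 this).le
  have hlb : ∀ t ≥ T, K/2 * t ^ γ ≤ ν t := by
    intro t ht
    have h0 : (0:ℝ) < t := by linarith
    have hKt : 0 < K * t ^ γ := mul_pos hK (Real.rpow_pos_of_pos h0 γ)
    have := (hT₀ t (le_trans (le_max_left _ _) ht)).1.1
    have := (lt_div_iff₀ hKt).1 this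
    nlinarith [Real.rpow_pos_of_pos h0 γ]
  have hC₀ : 0 ≤ C₀ := le_trans (hnn 0) (hbd 0)
  -- envelope M
  set M := max ((2*K)^(m-1)) (C₀^(m-1) / T ^ δ) with hMdef
  have hM0 : 0 < M := lt_max_iff.2 (Or.inl (pow_pos (by linarith) _))
  have hwb : ∀ t > 0, ν t ^ (m-1) ≤ M * t ^ δ := by
    intro t ht
    have htδ : 0 < t ^ δ := Real.rpow_pos_of_pos ht δ
    by_cases hTt : T ≤ t
    · calc ν t ^ (m-1) ≤ (2 * (K * t^γ))^(m-1) := pow_le_pow_left₀ (hnn t) (hub t hTt) _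
        _ = (2*K)^(m-1) * (t^γ)^(m-1) := by rw [← mul_assoc, mul_pow]
        _ = (2*K)^(m-1) * t ^ δ := by rw [hpowδ t ht.le]
        _ ≤ M * t ^ δ := mul_le_mul_of_nonneg_right (le_max_left _ _) htδ.le
    · push_neg at hTt
      have htδ2 : T ^ δ ≤ t ^ δ := Real.rpow_le_rpow_of_nonpos ht hTt.le hδ0
      have hTδpos : 0 < T ^ δ := Real.rpow_pos_of_pos hTpos δ
      calc ν t ^ (m-1) ≤ C₀^(m-1) := pow_le_pow_left₀ (hnn t) (hbd t) _
        _ = (C₀^(m-1) / T^δ) * T^δ := by field_simp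
        _ ≤ (C₀^(m-1) / T^δ) * t^δ :=
            mul_le_mul_of_nonneg_left htδ2 (by positivity)
        _ ≤ M * t ^ δ := mul_le_mul_of_nonneg_right (le_max_right _ _) htδ.le
  -- splittings
  obtain ⟨α₁, α₂, hAs, hα₁, hα₂, he₁, hq₁⟩ :=
    split_exists hα1 hα0 hβ1 hβ0 hδ1 hδ0 (by linarith)
  obtain ⟨β₁, β₂, hBs, hβ₁, hβ₂, he₂, hq₂⟩ :=
    split_exists hβ1 hβ0 hα1 hα0 hδ1 hδ0 (by linarith)
  have d1 : (0:ℝ) < α₂ + δ + 1 := by linarith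
  have d2 : (0:ℝ) < α₁ + β + 1 := by linarith
  have d3 : (0:ℝ) < β₂ + δ + 1 := by linarith
  have d4 : (0:ℝ) < β₁ + α + 1 := by linarith
  set E := α + β + δ + 3 with hE
  set cl := (K/2)^(m-1) / 128 with hcl
  set Cu := M/(α₂+δ+1)/(α₁+β+1) + M/(β₂+δ+1)/(β₁+α+1) with hCu
  have hclpos : 0 < cl := by positivity
  have hCunn : 0 ≤ Cu := by positivity
  refine ⟨cl, max Cu cl, max (8*T) 1, hclpos, le_max_right _ _,
    lt_of_lt_of_le one_pos (le_max_right _ _), ?_⟩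
  intro h hh
  have hh1 : (1:ℝ) ≤ h := le_trans (le_max_right _ _) hh
  have hhpos : (0:ℝ) < h := by linarith
  have hh8T : 8*T ≤ h := le_trans (le_max_left _ _) hh
  -- the integrand
  set cube := (Icc (0:ℝ) h) ×ˢ (Icc (0:ℝ) h) ×ˢ (Icc (0:ℝ) h) with hcube
  set Freal : ℝ×ℝ×ℝ → ℝ := fun p =>
    posPow (p.1 - p.2.1) α * posPow (p.1 - p.2.2) β * ν (p.2.1 - p.2.2) ^ (m - 1) with hFreal
  have hFrm : Measurable Freal := by
    apply Measurable.mul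
    apply Measurable.mul
    · exact (measurable_posPow α).comp
        (measurable_fst.sub (measurable_fst.comp measurable_snd))
    · exact (measurable_posPow β).comp
        (measurable_fst.sub (measurable_snd.comp measurable_snd))
    · exact (hmeas.pow_const _).comp
        ((measurable_fst.comp measurable_snd).sub (measurable_snd.comp measurable_snd))
  have hFnn : ∀ p, 0 ≤ Freal p := fun p =>
    mul_nonneg (mul_nonneg (posPow_nonneg _ _) (posPow_nonneg _ _)) (pow_nonneg (hnn _) _)
  -- lintegral upper bound
  have LU := upper_main (fun t => ν t ^ (m-1)) (hmeas.pow_const _)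
    (fun t => pow_nonneg (hnn t) _)
    (fun t => by simp only [heven t])
    M δ hM0.le hwb α β α₁ α₂ β₁ β₂ hAs hBs hα₁ hα₂ hβ₁ hβ₂ he₁ hq₁ he₂ hq₂ h hhpos.le
  -- rewrite RHS of LU into a single ofReal
  have hA₁nn : 0 ≤ h ^ (α₂+δ+1) / (α₂+δ+1) := by positivity
  have hB₁nn : 0 ≤ h ^ (α₁+β+1) / (α₁+β+1) := by positivity
  have hA₂nn : 0 ≤ h ^ (β₂+δ+1) / (β₂+δ+1) := by positivity
  have hB₂nn : 0 ≤ h ^ (β₁+α+1) / (β₁+α+1) := by positivity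
  have main_eq : h * (M * (h ^ (α₂+δ+1) / (α₂+δ+1)) * (h ^ (α₁+β+1) / (α₁+β+1))
      + M * (h ^ (β₂+δ+1) / (β₂+δ+1)) * (h ^ (β₁+α+1) / (β₁+α+1))) = Cu * h ^ E := by
    have e1 : h ^ (α₂+δ+1) * h ^ (α₁+β+1) * h ^ (1:ℝ) = h ^ E := by
      rw [← Real.rpow_add hhpos, ← Real.rpow_add hhpos]
      congr 1
      rw [hE, hAs]; ring
    have e2 : h ^ (β₂+δ+1) * h ^ (β₁+α+1) * h ^ (1:ℝ) = h ^ E := by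
      rw [← Real.rpow_add hhpos, ← Real.rpow_add hhpos]
      congr 1
      rw [hE, hBs]; ring
    rw [Real.rpow_one] at e1 e2
    rw [hCu]
    linear_combination (M/(α₂+δ+1)/(α₁+β+1)) * e1 + (M/(β₂+δ+1)/(β₁+α+1)) * e2
  have key : ∫⁻ p in cube, ENNReal.ofReal (Freal p) ≤ ENNReal.ofReal (Cu * h^E) := by
    refine le_trans LU (le_of_eq ?_)
    rw [← ENNReal.ofReal_mul hM0.le, ← ENNReal.ofReal_mul (mul_nonneg hM0.le hA₁nn),
      ← ENNReal.ofReal_mul hM0.le, ← ENNReal.ofReal_mul (mul_nonneg hM0.le hA₂nn),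
      ← ENNReal.ofReal_add (by positivity) (by positivity),
      ← ENNReal.ofReal_mul hhpos.le, main_eq]
  have hint : IntegrableOn Freal cube := by
    constructor
    · exact hFrm.aestronglyMeasurable
    · rw [hasFiniteIntegral_iff_ofReal (ae_of_all _ hFnn)]
      exact lt_of_le_of_lt key ENNReal.ofReal_lt_top
  constructor
  · -- lower bound
    set S := (Icc (3*h/4) h) ×ˢ ((Icc (0:ℝ) (h/8)) ×ˢ (Icc (h/4) (h/2))) with hS
    have hSsub : S ⊆ cube := by
      rw [hS, hcube]
      exact prod_mono (Icc_subset_Icc (by linarith) le_rfl)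
        (prod_mono (Icc_subset_Icc le_rfl (by linarith))
          (Icc_subset_Icc (by linarith) (by linarith)))
    have hSm : MeasurableSet S := measurableSet_Icc.prod
      (measurableSet_Icc.prod measurableSet_Icc)
    have hSvol : (volume : Measure (ℝ×ℝ×ℝ)) S
        = ENNReal.ofReal ((h/4) * ((h/8) * (h/4))) := by
      rw [hS, Measure.volume_eq_prod, Measure.prod_prod, Measure.volume_eq_prod,
        Measure.prod_prod, Real.volume_Icc, Real.volume_Icc, Real.volume_Icc,
        ← ENNReal.ofReal_mul (by linarith), ← ENNReal.ofReal_mul (by linarith)]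
      congr 1
      ring
    set cS := h ^ α * h ^ β * ((K/2) * h ^ γ) ^ (m-1) with hcS
    have hconst : ∀ p ∈ S, cS ≤ Freal p := by
      rintro ⟨s, u, v⟩ ⟨hs, hu, hv⟩
      obtain ⟨hs1, hs2⟩ := hs
      obtain ⟨hu1, hu2⟩ := hu
      obtain ⟨hv1, hv2⟩ := hv
      have hsu : 0 < s - u := by linarith
      have hsuh : s - u ≤ h := by linarith
      have hsv : 0 < s - v := by linarith
      have hsvh : s - v ≤ h := by linarith
      have hvuT : T ≤ v - u := by linarith
      have hvu : 0 < v - u := by linarith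
      have hvuh : v - u ≤ h := by linarith
      have b1 : h ^ α ≤ (s-u) ^ α := Real.rpow_le_rpow_of_nonpos hsu hsuh hα0.le
      have b2 : h ^ β ≤ (s-v) ^ β := Real.rpow_le_rpow_of_nonpos hsv hsvh hβ0.le
      have b3 : ((K/2) * h ^ γ) ^ (m-1) ≤ ν (u - v) ^ (m-1) := by
        have c1 : (K/2) * h ^ γ ≤ (K/2) * (v-u) ^ γ :=
          mul_le_mul_of_nonneg_left (Real.rpow_le_rpow_of_nonpos hvu hvuh hγ0.le)
            (by linarith)
        have c2 : K/2 * (v-u) ^ γ ≤ ν (v - u) := hlb (v-u) hvuT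
        have hnuv : ν (u - v) = ν (v - u) := by
          rw [show u - v = -(v-u) by ring, heven]
        rw [hnuv]
        exact pow_le_pow_left₀ (by positivity) (le_trans c1 c2) _
      show cS ≤ posPow (s - u) α * posPow (s - v) β * ν (u - v) ^ (m - 1)
      rw [posPow_of_pos hsu, posPow_of_pos hsv, hcS]
      exact mul_le_mul (mul_le_mul b1 b2 (Real.rpow_nonneg hhpos.le β)
          (Real.rpow_nonneg hsu.le α)) b3 (by positivity)
        (mul_nonneg (Real.rpow_nonneg hsu.le α) (Real.rpow_nonneg hsv.le β))
    have hlow1 : cS * ((volume S).toReal) ≤ ∫ p in S, Freal p :=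
      setIntegral_ge_of_const_le_real hSm (by rw [hSvol]; exact ENNReal.ofReal_ne_top)
        hconst (hint.mono_set hSsub)
    have hlow2 : (∫ p in S, Freal p) ≤ ∫ p in cube, Freal p :=
      setIntegral_mono_set hint (ae_of_all _ hFnn) (HasSubset.Subset.eventuallyLE hSsub)
    have hvolS : (volume S).toReal = (h/4) * ((h/8) * (h/4)) := by
      rw [hSvol, ENNReal.toReal_ofReal (by positivity)]
    have hfinlow : cl * h ^ E = cS * ((h/4) * ((h/8) * (h/4))) := by
      have e3 : ((K/2) * h ^ γ) ^ (m-1) = (K/2)^(m-1) * h ^ δ := by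
        rw [mul_pow, hpowδ h hhpos.le]
      have e4 : h ^ α * h ^ β * h ^ δ * h ^ (3:ℝ) = h ^ E := by
        rw [← Real.rpow_add hhpos, ← Real.rpow_add hhpos, ← Real.rpow_add hhpos]
      have e5 : h ^ (3:ℝ) = h * h * h := by
        rw [show (3:ℝ) = ((3:ℕ):ℝ) by norm_num, Real.rpow_natCast]
        ring
      rw [hcl, hcS, e3, ← e4, e5]
      ring
    calc cl * h ^ E = cS * ((h/4) * ((h/8) * (h/4))) := hfinlow
      _ = cS * ((volume S).toReal) := by rw [hvolS]
      _ ≤ ∫ p in S, Freal p := hlow1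
      _ ≤ ∫ p in cube, Freal p := hlow2
  · -- upper bound
    have hup : (∫ p in cube, Freal p) ≤ Cu * h ^ E := by
      rw [integral_eq_lintegral_of_nonneg_ae (ae_of_all _ hFnn) hFrm.aestronglyMeasurable]
      exact ENNReal.toReal_le_of_le_ofReal (by positivity) key
    calc (∫ p in cube, Freal p) ≤ Cu * h ^ E := hup
      _ ≤ max Cu cl * h ^ E :=
        mul_le_mul_of_nonneg_right (le_max_left _ _) (Real.rpow_nonneg hhpos.le _)
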